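/- Let D1 and D2 be DAGs on the same node set inducing the same d-separation relations (i.e., for all nodes u, v and sets S, S d-separates u and v in D1 iff it does so in D2). Then D1 and D2 have the same skeleton: u and v are adjacent in D1 iff they are adjacent in D2. -/

import Mathlib

/-- Adjacency: an edge in either direction. -/
def Adj {V : Type*} (E : V → V → Prop) (u v : V) : Prop := E u v ∨ E v u

/-- A directed graph is acyclic if no node lies on a directed cycle. -/
def Acyclic {V : Type*} (E : V → V → Prop) : Prop := ∀ v, ¬ Relation.TransGen E v v

/-- `Desc E v w` : `w` is a descendant of `v` (including `v` itself). -/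
def Desc {V : Type*} (E : V → V → Prop) (v w : V) : Prop := Relation.ReflTransGen E v w

/-- A path between `u` and `v`: a nonempty list of distinct, consecutively adjacent
nodes starting at `u` and ending at `v`. -/
def IsPath {V : Type*} (E : V → V → Prop) (u v : V) (p : List V) : Prop :=
  p.Nodup ∧ p.Chain' (Adj E) ∧ p.head? = some u ∧ p.getLast? = some v

/-- The node at (interior) position `i` of the path `p` is a collider:
both path edges point into it. -/
def ColliderAt {V : Type*} (E : V → V → Prop) (p : List V) (i : ℕ) : Prop :=
  0 < i ∧ ∃ a w b, p[i-1]? = some a ∧ p[i]? = some w ∧ p[i+1]? = some b ∧ E a w ∧ E b w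

/-- A path is blocked by `S` if it contains an interior non-collider in `S`, or a
collider none of whose descendants (including itself) is in `S`. -/
def Blocked {V : Type*} (E : V → V → Prop) (S : Set V) (p : List V) : Prop :=
  (∃ i w, 0 < i ∧ i + 1 < p.length ∧ p[i]? = some w ∧ ¬ ColliderAt E p i ∧ w ∈ S) ∨
  (∃ i w, ColliderAt E p i ∧ p[i]? = some w ∧ ∀ d, Desc E w d → d ∉ S)

/-- `S` d-separates `u` and `v`: every path between them is blocked by `S`. -/
def DSep {V : Type*} (E : V → V → Prop) (S : Set V) (u v : V) : Prop :=
  ∀ p, IsPath E u v p → Blocked E S p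

section Aux

variable {V : Type*} {E : V → V → Prop} {S : Set V} {u v : V}

lemma rev_get (p : List V) {i j : ℕ} (hj : j < p.length) (hij : p.length - 1 - j = i) :
    p.reverse[j]? = p[i]? := by
  subst hij; exact List.getElem?_reverse hj

lemma mem_of_getElem?_eq_some {p : List V} {i : ℕ} {w : V} (h : p[i]? = some w) :
    i < p.length := by
  by_contra hc
  rw [List.getElem?_eq_none (by omega)] at h
  cases h

lemma adj_not_dsep (hac : Acyclic E) (hadj : Adj E u v) (S : Set V) :
    ¬ DSep E S u v := by
  have hne : u ≠ v := by
    rintro rfl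
    rcases hadj with h | h <;> exact hac u (Relation.TransGen.single h)
  intro hd
  have hp : IsPath E u v [u, v] := by
    refine ⟨by simp [hne], List.isChain_pair.mpr hadj, rfl, rfl⟩
  rcases hd _ hp with ⟨i, w, hi, hlen, _, _, _⟩ | ⟨i, w, ⟨hi, a, w', b, _, _, hb, _⟩, _, _⟩
  · simp at hlen; omega
  · have := mem_of_getElem?_eq_some hb
    simp at this; omega

lemma isPath_reverse {p : List V} (hp : IsPath E u v p) : IsPath E v u p.reverse := by
  obtain ⟨hnd, hch, hh, hl⟩ := hp
  refine ⟨List.nodup_reverse.mpr hnd, ?_, ?_, ?_⟩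
  · exact List.isChain_reverse.mpr (hch.imp fun a b hab => Or.symm hab)
  · rw [List.head?_reverse]; exact hl
  · rw [List.getLast?_reverse]; exact hh

lemma blocked_reverse {p : List V} (hb : Blocked E S p) : Blocked E S p.reverse := by
  have hlenr : p.reverse.length = p.length := List.length_reverse
  rcases hb with ⟨i, w, hi0, hin, hiw, hnc, hwS⟩ | ⟨i, w, ⟨hi0, a, w', b, ha, hw', hbb, haw, hbw⟩, hiw, hdesc⟩
  · set n := p.length with hn
    refine Or.inl ⟨n - 1 - i, w, by omega, by omega, ?_, ?_, hwS⟩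
    · rw [rev_get p (by omega) (show n - 1 - (n - 1 - i) = i by omega)]; exact hiw
    · rintro ⟨hj0, a, w', b, ha, hw', hbb, haw, hbw⟩
      apply hnc
      refine ⟨hi0, b, w', a, ?_, ?_, ?_, hbw, haw⟩
      · rw [← rev_get p (show n - 1 - i + 1 < p.length by omega)
          (show n - 1 - (n - 1 - i + 1) = i - 1 by omega)]
        exact hbb
      · rw [← rev_get p (by omega) (show n - 1 - (n - 1 - i) = i by omega)]
        exact hw'
      · rw [← rev_get p (show n - 1 - i - 1 < p.length by omega)
          (show n - 1 - (n - 1 - i - 1) = i + 1 by omega)]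
        exact ha
  · set n := p.length with hn
    have hin : i + 1 < n := mem_of_getElem?_eq_some hbb
    refine Or.inr ⟨n - 1 - i, w, ⟨by omega, b, w', a, ?_, ?_, ?_, hbw, haw⟩, ?_, hdesc⟩
    · rw [rev_get p (show n - 1 - i - 1 < p.length by omega)
        (show n - 1 - (n - 1 - i - 1) = i + 1 by omega)]
      exact hbb
    · rw [rev_get p (by omega) (show n - 1 - (n - 1 - i) = i by omega)]
      exact hw'
    · rw [rev_get p (show n - 1 - i + 1 < p.length by omega)
        (show n - 1 - (n - 1 - i + 1) = i - 1 by omega)]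
      exact ha
    · rw [rev_get p (by omega) (show n - 1 - (n - 1 - i) = i by omega)]
      exact hiw

lemma dsep_symm (hd : DSep E S u v) : DSep E S v u := by
  intro p hp
  have h1 := hd p.reverse (isPath_reverse hp)
  have h2 := blocked_reverse h1
  rwa [List.reverse_reverse] at h2

lemma dsep_parents (hac : Acyclic E) (hne : u ≠ v) (hadj : ¬ Adj E u v)
    (hnd : ¬ Desc E u v) : DSep E {w | E w u} u v := by
  classical
  intro p hp
  obtain ⟨hnodup, hch, hh, hl⟩ := hp
  set n := p.length with hn
  set f : ℕ → V := fun i => p[i]?.getD u with hf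
  have hpe : p ≠ [] := by rintro rfl; simp at hh
  have hnpos : 0 < n := List.length_pos_iff.mpr hpe
  have hfi : ∀ i, i < n → p[i]? = some (f i) := by
    intro i hi
    simp [hf, List.getElem?_eq_getElem hi]
  have hf0 : f 0 = u := by
    rw [List.head?_eq_getElem?] at hh; simp [hf, hh]
  have hfl : f (n - 1) = v := by
    rw [List.getLast?_eq_getElem?] at hl; show (p[n-1]?).getD u = v; rw [hn, hl, Option.getD_some]
  have hAdj : ∀ i, i + 1 < n → Adj E (f i) (f (i + 1)) := by
    intro i hi
    have h := List.isChain_iff_getElem.mp hch i (by omega)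
    have e1 : f i = p.get ⟨i, by omega⟩ := by
      simp [hf, List.getElem?_eq_getElem (show i < n by omega)]
    have e2 : f (i + 1) = p.get ⟨i + 1, by omega⟩ := by
      simp [hf, List.getElem?_eq_getElem hi]
    rw [e1, e2]; exact h
  have hn3 : 3 ≤ n := by
    rcases (show n = 1 ∨ n = 2 ∨ 3 ≤ n by omega) with h1 | h2 | h3
    · exact absurd (hf0.symm.trans (by rw [← hfl, h1])) hne
    · have := hAdj 0 (by omega)
      rw [hf0, show (0 : ℕ) + 1 = n - 1 by omega, hfl] at this
      exact absurd this hadj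
    · exact h3
  have chainDesc : ∀ m, m < n → (∀ i, i < m → E (f i) (f (i + 1))) →
      Relation.ReflTransGen E u (f m) := by
    intro m
    induction m with
    | zero => intro _ _; rw [hf0]
    | succ k ih =>
      intro hk hfw
      exact Relation.ReflTransGen.tail (ih (by omega) (fun i hi => hfw i (by omega)))
        (hfw k (by omega))
  rcases hAdj 0 (by omega) with hE01 | hE10
  · -- forward first edge: find the first collider
    set P : ℕ → Prop := fun m => ∀ i, i < m → E (f i) (f (i + 1)) with hP
    set j := Nat.findGreatest P (n - 1) with hj
    have hP1 : P 1 := by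
      intro i hi
      have : i = 0 := by omega
      subst this; exact hE01
    have hj1 : 1 ≤ j := Nat.le_findGreatest (by omega) hP1
    have hjn : j ≤ n - 1 := Nat.findGreatest_le _
    have hPj : P j := Nat.findGreatest_spec (m := 1) (by omega) hP1
    rcases eq_or_lt_of_le hjn with hje | hjlt
    · exfalso
      apply hnd
      show Relation.ReflTransGen E u v
      rw [← hfl]
      exact chainDesc (n - 1) (by omega) (hje ▸ hPj)
    · have hnP : ¬ P (j + 1) := Nat.findGreatest_is_greatest (n := n - 1) (by omega) (by omega)
      have hEj : ¬ E (f j) (f (j + 1)) := by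
        intro he
        apply hnP
        intro i hi
        rcases (show i < j ∨ i = j by omega) with h' | h'
        · exact hPj i h'
        · subst h'; exact he
      have hBack : E (f (j + 1)) (f j) := (hAdj j (by omega)).resolve_left hEj
      have hj1e : j - 1 + 1 = j := by omega
      refine Or.inr ⟨j, f j, ⟨by omega, f (j - 1), f j, f (j + 1),
        hfi (j - 1) (by omega), hfi j (by omega), hfi (j + 1) (by omega),
        ?_, hBack⟩, hfi j (by omega), ?_⟩
      · have := hPj (j - 1) (by omega)
        rwa [hj1e] at this
      · intro d hd hdS
        have h1 : Relation.ReflTransGen E u d :=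
          Relation.ReflTransGen.trans (chainDesc j (by omega) hPj) hd
        exact hac u (Relation.TransGen.tail' h1 hdS)
  · -- backward first edge: f 1 is a parent of u, non-collider at position 1
    refine Or.inl ⟨1, f 1, by omega, by omega, hfi 1 (by omega), ?_, ?_⟩
    · rintro ⟨-, a, w', b, ha, hw', hb, haw, hbw⟩
      simp only [show (1 : ℕ) - 1 = 0 from rfl] at ha
      rw [hfi 0 (by omega)] at ha
      rw [hfi 1 (by omega)] at hw'
      have haE := Option.some.inj ha
      have hwE := Option.some.inj hw'
      subst haE; subst hwE
      exact hac (f 0) (Relation.TransGen.head' haw (Relation.ReflTransGen.single hE10))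
    · show E (f 1) u
      rw [← hf0]; exact hE10

lemma nonadj_dsep (hac : Acyclic E) (hne : u ≠ v) (hadj : ¬ Adj E u v) :
    ∃ S, DSep E S u v := by
  by_cases hd : Desc E u v
  · have hnd : ¬ Desc E v u := by
      intro hvu
      rcases (Relation.ReflTransGen.cases_head hd) with rfl | ⟨w, huw, hwv⟩
      · exact hne rfl
      · exact hac u (Relation.TransGen.head' huw (Relation.ReflTransGen.trans hwv hvu))
    exact ⟨_, dsep_symm (dsep_parents hac hne.symm (fun a => hadj (Or.symm a)) hnd)⟩
  · exact ⟨_, dsep_parents hac hne hadj hd⟩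

end Aux

/-- Two DAGs inducing the same d-separation relations have the same skeleton. -/
theorem same_dsep_same_skeleton {V : Type*} [Fintype V]
    (E₁ E₂ : V → V → Prop) (h₁ : Acyclic E₁) (h₂ : Acyclic E₂)
    (h : ∀ (S : Set V) (u v : V), DSep E₁ S u v ↔ DSep E₂ S u v) :
    ∀ u v : V, Adj E₁ u v ↔ Adj E₂ u v := by
  have key : ∀ (F₁ F₂ : V → V → Prop), Acyclic F₁ → Acyclic F₂ →
      (∀ (S : Set V) (u v : V), DSep F₁ S u v ↔ DSep F₂ S u v) →
      ∀ u v : V, Adj F₁ u v → Adj F₂ u v := by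
    intro F₁ F₂ g₁ g₂ g u v hadj
    have hne : u ≠ v := by
      rintro rfl
      rcases hadj with e | e <;> exact g₁ u (Relation.TransGen.single e)
    by_contra hna
    obtain ⟨S, hS⟩ := nonadj_dsep g₂ hne hna
    exact adj_not_dsep g₁ hadj S ((g S u v).mpr hS)
  intro u v
  exact ⟨key E₁ E₂ h₁ h₂ h u v, key E₂ E₁ h₂ h₁ (fun S u v => (h S u v).symm) u v⟩
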